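/- arXiv:2006.03727 — 3 statements merged into one kernel-verified Lean document; each statement's English description precedes it below -/
import Mathlib

section
/- Let Q₀ be a nonempty open bounded subset of ℝ^d \ {0}, A a d×d real expansive matrix, a, τ, σ, C, L, N > 0, and let ĝ : ℝ^d → ℂ be measurable with |ĝ(ξ)| ≤ C·min{1, |ξ|^L}·(1+|ξ|)^{−N} for all ξ ∈ ℝ^d. Then for all m, n ∈ ℤ with n − m ≥ 0: M_{mn} ≤ a^{τ(m−n)} · (1 + b·λ₊^{n−m})^σ · [ C · min{1, (b·λ₊^{n−m}·R)^L} / (1 + λ₋^{n−m}·r/b)^N ]^τ. -/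
open MeasureTheory

noncomputable section

/-- A real square matrix is *expansive* if every complex eigenvalue has modulus `> 1`. -/
def IsExpansive {d : ℕ} (A : Matrix (Fin d) (Fin d) ℝ) : Prop :=
  ∀ μ ∈ spectrum ℂ (A.map (Complex.ofReal)), 1 < ‖μ‖

/-- Image of a set under the linear map on Euclidean space induced by a matrix. -/
def matImage {d : ℕ} (M : Matrix (Fin d) (Fin d) ℝ) (S : Set (EuclideanSpace ℝ (Fin d))) :
    Set (EuclideanSpace ℝ (Fin d)) :=
  (Matrix.toEuclideanLin M) '' S

/-- Operator norm of a matrix acting on Euclidean space. -/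
def opNorm {d : ℕ} (M : Matrix (Fin d) (Fin d) ℝ) : ℝ :=
  ‖Matrix.toEuclideanCLM (𝕜 := ℝ) M‖

/-- `1 < λ₋ < min |σ(A)| ≤ max |σ(A)| < λ₊`. -/
def SpecBound {d : ℕ} (A : Matrix (Fin d) (Fin d) ℝ) (lm lp : ℝ) : Prop :=
  1 < lm ∧ ∀ μ ∈ spectrum ℂ (A.map (Complex.ofReal)),
    lm < ‖μ‖ ∧ ‖μ‖ < lp

/-- `b` is a comparison constant for the powers of `A`:
`(1/b)·λ₋^j·|ξ| ≤ |A^j ξ| ≤ b·λ₊^j·|ξ|` and `(1/b)·λ₊^{-j}·|ξ| ≤ |A^{-j} ξ| ≤ b·λ₋^{-j}·|ξ|`. -/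
def ExpBound {d : ℕ} (A : Matrix (Fin d) (Fin d) ℝ) (lm lp b : ℝ) : Prop :=
  ∀ (ξ : EuclideanSpace ℝ (Fin d)) (j : ℕ),
    (1 / b) * lm ^ j * ‖ξ‖ ≤ ‖Matrix.toEuclideanLin (A ^ (j : ℤ)) ξ‖ ∧
    ‖Matrix.toEuclideanLin (A ^ (j : ℤ)) ξ‖ ≤ b * lp ^ j * ‖ξ‖ ∧
    (1 / b) * lp ^ (-(j : ℤ)) * ‖ξ‖ ≤ ‖Matrix.toEuclideanLin (A ^ (-(j : ℤ))) ξ‖ ∧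
    ‖Matrix.toEuclideanLin (A ^ (-(j : ℤ))) ξ‖ ≤ b * lm ^ (-(j : ℤ)) * ‖ξ‖

/-- Pointwise estimate of `M_{mn}` for n − m ≥ 0. -/
theorem homogeneous_Mmn_pointwise_nonneg
    (d : ℕ) (hd : 1 ≤ d) (A : Matrix (Fin d) (Fin d) ℝ) (hA : IsExpansive A)
    (lm lp : ℝ) (hspec : SpecBound A lm lp)
    (b : ℝ) (hb : 0 < b) (hexp : ExpBound A lm lp b)
    (Q₀ : Set (EuclideanSpace ℝ (Fin d))) (hQne : Q₀.Nonempty) (hQopen : IsOpen Q₀)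
    (hQbdd : Bornology.IsBounded Q₀) (hQ0 : (0 : EuclideanSpace ℝ (Fin d)) ∉ Q₀)
    (r R : ℝ) (hr : 0 < r) (hrR : ∀ ξ ∈ Q₀, r ≤ ‖ξ‖ ∧ ‖ξ‖ ≤ R)
    (a τ σ C L N : ℝ) (ha : 0 < a) (hτ : 0 < τ) (hσ : 0 < σ) (hC : 0 < C)
    (hL : 0 < L) (hN : 0 < N)
    (g : EuclideanSpace ℝ (Fin d) → ℂ) (hgm : Measurable g)
    (hg : ∀ ξ : EuclideanSpace ℝ (Fin d),
      ‖g ξ‖ ≤ C * min 1 (‖ξ‖ ^ L) * (1 + ‖ξ‖) ^ (-N))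
    (M : ℤ → ℤ → ℝ)
    (hM : ∀ m n : ℤ, M m n =
      a ^ (τ * ((m : ℝ) - (n : ℝ))) * (1 + opNorm (A ^ (n - m))) ^ σ *
        ((volume (matImage (A ^ n) Q₀)).toReal⁻¹ *
          ∫ ξ in matImage (A ^ n) Q₀,
            ‖g (Matrix.toEuclideanLin (A ^ (-m)) ξ)‖) ^ τ) :
    ∀ m n : ℤ, 0 ≤ n - m →
      M m n ≤ a ^ (τ * ((m : ℝ) - (n : ℝ))) * (1 + b * lp ^ (n - m)) ^ σ *
        (C * min 1 ((b * lp ^ (n - m) * R) ^ L) / (1 + lm ^ (n - m) * r / b) ^ N) ^ τ := by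
  intro m n hnm
  have hlm1 : (1 : ℝ) < lm := hspec.1
  obtain ⟨ξ₀, hξ₀⟩ := hQne
  have hξ₀pos : 0 < ‖ξ₀‖ := lt_of_lt_of_le hr (hrR ξ₀ hξ₀).1
  -- lp is positive
  have hlp : 0 < lp := by
    have h3 : (1 / b) * lm ^ 1 * ‖ξ₀‖ ≤ b * lp ^ 1 * ‖ξ₀‖ := (hexp ξ₀ 1).1.trans (hexp ξ₀ 1).2.1
    simp only [pow_one] at h3
    by_contra hlpn
    push_neg at hlpn
    have hr1 : b * lp * ‖ξ₀‖ ≤ 0 :=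
      mul_nonpos_of_nonpos_of_nonneg (mul_nonpos_of_nonneg_of_nonpos hb.le hlpn) (norm_nonneg _)
    have hl1 : 0 < 1 / b * lm * ‖ξ₀‖ := by
      apply mul_pos (mul_pos (by positivity) (by linarith)) hξ₀pos
    linarith
  -- A has unit determinant
  have hdet : IsUnit A.det := by
    by_contra h
    have h0 : (0 : ℂ) ∈ spectrum ℂ (A.map Complex.ofReal) := by
      rw [spectrum.zero_mem_iff, Matrix.isUnit_iff_isUnit_det]
      intro hu
      apply h
      have hdet2 : ((A.det : ℂ)) = (A.map Complex.ofReal).det :=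
        RingHom.map_det Complex.ofRealHom A
      rw [← hdet2] at hu
      have hne : (A.det : ℂ) ≠ 0 := hu.ne_zero
      exact isUnit_iff_ne_zero.mpr (by exact_mod_cast hne)
    have h1 := hA 0 h0
    rw [norm_zero] at h1
    norm_num at h1
  set k := (n - m).toNat with hkdef
  have hk : ((k : ℤ)) = n - m := Int.toNat_of_nonneg hnm
  -- composition lemma
  have hmulapp : ∀ (X Y : Matrix (Fin d) (Fin d) ℝ) (ξ : EuclideanSpace ℝ (Fin d)),
      Matrix.toEuclideanLin (X * Y) ξ = Matrix.toEuclideanLin X (Matrix.toEuclideanLin Y ξ) := by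
    intro X Y ξ
    simp [Matrix.toEuclideanLin_apply, Matrix.mulVec_mulVec]
  have hmm : A ^ (-m) * A ^ n = A ^ ((k : ℤ)) := by
    rw [hk, ← Matrix.zpow_add hdet]
    ring_nf
  -- the pointwise constant
  set K : ℝ := C * min 1 ((b * lp ^ k * R) ^ L) / (1 + lm ^ k * r / b) ^ N with hKdef
  have hlmk0 : (0:ℝ) < lm ^ k := pow_pos (by linarith) k
  have hRpos : 0 < R := lt_of_lt_of_le hr ((hrR ξ₀ hξ₀).1.trans (hrR ξ₀ hξ₀).2)
  have hmin0 : (0:ℝ) ≤ min 1 ((b * lp ^ k * R) ^ L) :=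
    le_min (by norm_num) (Real.rpow_nonneg
      (mul_nonneg (mul_nonneg hb.le (pow_nonneg hlp.le k)) hRpos.le) L)
  have hden_pos : (0 : ℝ) < 1 + lm ^ k * r / b := by
    have h1 : 0 < lm ^ k * r / b := div_pos (mul_pos hlmk0 hr) hb
    linarith
  have hK0 : 0 ≤ K := by
    exact div_nonneg (mul_nonneg hC.le hmin0) (Real.rpow_nonneg hden_pos.le N)
  -- pointwise bound on the integrand
  have hbound : ∀ ξ ∈ matImage (A ^ n) Q₀,
      ‖g (Matrix.toEuclideanLin (A ^ (-m)) ξ)‖ ≤ K := by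
    rintro ξ ⟨η, hη, rfl⟩
    rw [← hmulapp, hmm]
    have hlow := (hexp η k).1
    have hup := (hexp η k).2.1
    have hηr : r ≤ ‖η‖ := (hrR η hη).1
    have hηR : ‖η‖ ≤ R := (hrR η hη).2
    set w := Matrix.toEuclideanLin (A ^ ((k : ℤ))) η with hw
    have hwle : ‖w‖ ≤ b * lp ^ k * R := by
      refine hup.trans ?_
      have : 0 < b * lp ^ k := by positivity
      nlinarith
    have hwge : lm ^ k * r / b ≤ ‖w‖ := by
      refine le_trans ?_ hlow
      have heq : lm ^ k * r / b = 1 / b * lm ^ k * r := by ring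
      rw [heq]
      exact mul_le_mul_of_nonneg_left hηr (mul_nonneg (by positivity) hlmk0.le)
    calc ‖g w‖ ≤ C * min 1 (‖w‖ ^ L) * (1 + ‖w‖) ^ (-N) := hg w
      _ ≤ (C * min 1 ((b * lp ^ k * R) ^ L)) * (1 + lm ^ k * r / b) ^ (-N) := by
          apply mul_le_mul
          · apply mul_le_mul_of_nonneg_left _ hC.le
            exact min_le_min le_rfl (Real.rpow_le_rpow (norm_nonneg w) hwle hL.le)
          · exact Real.rpow_le_rpow_of_nonpos hden_pos (by linarith) (by linarith)
          · exact Real.rpow_nonneg (by positivity) _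
          · exact mul_nonneg hC.le hmin0
      _ = K := by
          rw [hKdef, Real.rpow_neg hden_pos.le]
          ring
  -- measure of the image is positive and finite
  set S : Set (EuclideanSpace ℝ (Fin d)) := matImage (A ^ n) Q₀ with hSdef
  have hdetf : LinearMap.det (Matrix.toEuclideanLin (A ^ n) : _ →ₗ[ℝ] _) = (A ^ n).det := by
    rw [Matrix.toEuclideanLin_eq_toLin]
    exact LinearMap.det_toLin _ _
  have hvolS : volume S = ENNReal.ofReal |(A ^ n).det| * volume Q₀ := by
    rw [hSdef]
    show volume ((Matrix.toEuclideanLin (A ^ n) : _ →ₗ[ℝ] _) '' Q₀) = _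
    rw [Measure.addHaar_image_linearMap, hdetf]
  have hdetn : (A ^ n).det ≠ 0 := by
    have := hdet.det_zpow n
    exact this.ne_zero
  have hSpos : 0 < volume S := by
    rw [hvolS]
    exact ENNReal.mul_pos (ENNReal.ofReal_pos.mpr (abs_pos.mpr hdetn)).ne'
      (hQopen.measure_pos volume ⟨ξ₀, hξ₀⟩).ne'
  have hSfin : volume S < ⊤ := by
    rw [hvolS]
    exact ENNReal.mul_lt_top ENNReal.ofReal_lt_top hQbdd.measure_lt_top
  have hV : 0 < (volume S).toReal := ENNReal.toReal_pos hSpos.ne' hSfin.ne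
  -- bound the integral
  have hIntLe : (∫ ξ in S, ‖g (Matrix.toEuclideanLin (A ^ (-m)) ξ)‖)
      ≤ K * (volume S).toReal := by
    have hmeas : AEStronglyMeasurable
        (fun ξ => ‖g (Matrix.toEuclideanLin (A ^ (-m)) ξ)‖)
        (volume.restrict S) := by
      apply Measurable.aestronglyMeasurable
      exact continuous_norm.measurable.comp
        (hgm.comp (LinearMap.continuous_of_finiteDimensional _).measurable)
    have h := norm_setIntegral_le_of_norm_le_const (μ := volume) (s := S)
      (f := fun ξ => ‖g (Matrix.toEuclideanLin (A ^ (-m)) ξ)‖) (C := K) hSfin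
      (fun x hx => by
        rw [Real.norm_eq_abs, abs_of_nonneg (norm_nonneg _)]
        exact hbound x hx)
    calc (∫ ξ in S, ‖g (Matrix.toEuclideanLin (A ^ (-m)) ξ)‖)
        ≤ ‖∫ ξ in S, ‖g (Matrix.toEuclideanLin (A ^ (-m)) ξ)‖‖ := le_abs_self _
      _ ≤ K * (volume S).toReal := h
  have hY : (volume S).toReal⁻¹ *
      (∫ ξ in S, ‖g (Matrix.toEuclideanLin (A ^ (-m)) ξ)‖) ≤ K := by
    rw [inv_mul_le_iff₀ hV]
    calc _ ≤ K * (volume S).toReal := hIntLe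
      _ = (volume S).toReal * K := mul_comm _ _
  have hYnn : 0 ≤ (volume S).toReal⁻¹ *
      (∫ ξ in S, ‖g (Matrix.toEuclideanLin (A ^ (-m)) ξ)‖) := by
    apply mul_nonneg (by positivity)
    exact integral_nonneg fun ξ => norm_nonneg _
  -- operator norm bound
  have hcoe : ∀ (X : Matrix (Fin d) (Fin d) ℝ) (ξ : EuclideanSpace ℝ (Fin d)),
      (Matrix.toEuclideanCLM (𝕜 := ℝ) X) ξ = Matrix.toEuclideanLin X ξ := by
    intro X ξ
    rw [← Matrix.coe_toEuclideanCLM_eq_toEuclideanLin]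
    rfl
  have hop : opNorm (A ^ (n - m)) ≤ b * lp ^ k := by
    rw [← hk]
    apply ContinuousLinearMap.opNorm_le_bound _ (by positivity)
    intro ξ
    rw [hcoe]
    exact (hexp ξ k).2.1
  -- assemble
  rw [hM m n, ← hk, zpow_natCast lp k, zpow_natCast lm k]
  have hP : (0:ℝ) ≤ a ^ (τ * ((m : ℝ) - (n : ℝ))) := Real.rpow_nonneg ha.le _
  have hX : (0:ℝ) ≤ 1 + opNorm (A ^ ((k : ℤ))) := by
    have : (0:ℝ) ≤ opNorm (A ^ ((k : ℤ))) := norm_nonneg _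
    linarith
  rw [← hk] at hop
  gcongr
end
end

section
/- Let Q₀ be a nonempty open bounded subset of ℝ^d \ {0}, A a d×d real expansive matrix, a, τ, σ, C, L, N > 0, and let ĝ : ℝ^d → ℂ be measurable with |ĝ(ξ)| ≤ C·min{1, |ξ|^L}·(1+|ξ|)^{−N} for all ξ ∈ ℝ^d. Then for all m, n ∈ ℤ with n − m ≤ 0: M_{mn} ≤ a^{τ(m−n)} · (1 + b·λ₋^{n−m})^σ · [ C · min{1, (b·λ₋^{n−m}·R)^L} / (1 + λ₊^{n−m}·r/b)^N ]^τ. -/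
open MeasureTheory

noncomputable section

lemma toEL_mul {d : ℕ} (M N : Matrix (Fin d) (Fin d) ℝ) (v : EuclideanSpace ℝ (Fin d)) :
    Matrix.toEuclideanLin (M * N) v = Matrix.toEuclideanLin M (Matrix.toEuclideanLin N v) := by
  simp [Matrix.toEuclideanLin_apply, Matrix.mulVec_mulVec]

lemma expansive_isUnit_det {d : ℕ} {A : Matrix (Fin d) (Fin d) ℝ}
    (hA : ∀ μ ∈ spectrum ℂ (A.map (Complex.ofReal)), 1 < ‖μ‖) : IsUnit A.det := by
  rw [isUnit_iff_ne_zero]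
  intro h
  have hdet : (A.map (Complex.ofReal)).det = 0 := by
    have h2 := RingHom.map_det (Complex.ofRealHom) A
    simp only [RingHom.mapMatrix_apply] at h2
    rw [show A.map Complex.ofReal = A.map Complex.ofRealHom from rfl, ← h2, h]
    simp
  have hnu : ¬ IsUnit (A.map (Complex.ofReal)) := by
    rw [Matrix.isUnit_iff_isUnit_det, hdet]
    exact not_isUnit_zero
  have h0 : (0 : ℂ) ∈ spectrum ℂ (A.map (Complex.ofReal)) := (spectrum.zero_mem_iff ℂ).mpr hnu
  have := hA 0 h0
  simp at this
  linarith

/-- Pointwise estimate of `M_{mn}` for n − m ≤ 0. -/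
theorem homogeneous_Mmn_pointwise_nonpos
    (d : ℕ) (hd : 1 ≤ d) (A : Matrix (Fin d) (Fin d) ℝ) (hA : IsExpansive A)
    (lm lp : ℝ) (hspec : SpecBound A lm lp)
    (b : ℝ) (hb : 0 < b) (hexp : ExpBound A lm lp b)
    (Q₀ : Set (EuclideanSpace ℝ (Fin d))) (hQne : Q₀.Nonempty) (hQopen : IsOpen Q₀)
    (hQbdd : Bornology.IsBounded Q₀) (hQ0 : (0 : EuclideanSpace ℝ (Fin d)) ∉ Q₀)
    (r R : ℝ) (hr : 0 < r) (hrR : ∀ ξ ∈ Q₀, r ≤ ‖ξ‖ ∧ ‖ξ‖ ≤ R)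
    (a τ σ C L N : ℝ) (ha : 0 < a) (hτ : 0 < τ) (hσ : 0 < σ) (hC : 0 < C)
    (hL : 0 < L) (hN : 0 < N)
    (g : EuclideanSpace ℝ (Fin d) → ℂ) (hgm : Measurable g)
    (hg : ∀ ξ : EuclideanSpace ℝ (Fin d),
      ‖g ξ‖ ≤ C * min 1 (‖ξ‖ ^ L) * (1 + ‖ξ‖) ^ (-N))
    (M : ℤ → ℤ → ℝ)
    (hM : ∀ m n : ℤ, M m n =
      a ^ (τ * ((m : ℝ) - (n : ℝ))) * (1 + opNorm (A ^ (n - m))) ^ σ *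
        ((volume (matImage (A ^ n) Q₀)).toReal⁻¹ *
          ∫ ξ in matImage (A ^ n) Q₀,
            ‖g (Matrix.toEuclideanLin (A ^ (-m)) ξ)‖) ^ τ) :
    ∀ m n : ℤ, n - m ≤ 0 →
      M m n ≤ a ^ (τ * ((m : ℝ) - (n : ℝ))) * (1 + b * lm ^ (n - m)) ^ σ *
        (C * min 1 ((b * lm ^ (n - m) * R) ^ L) / (1 + lp ^ (n - m) * r / b) ^ N) ^ τ := by
  intro m n hmn
  have hdet : IsUnit A.det := expansive_isUnit_det hA
  set j : ℕ := (m - n).toNat with hjdef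
  have hjm : ((j : ℤ)) = m - n := Int.toNat_of_nonneg (by omega)
  have hnm : n - m = -(j : ℤ) := by omega
  have hlm1 : 1 < lm := hspec.1
  have hlm0 : (0 : ℝ) < lm := by linarith
  -- lp > 0
  haveI : Nonempty (Fin d) := ⟨⟨0, hd⟩⟩
  obtain ⟨ξ₀, hξ₀⟩ : ∃ ξ : EuclideanSpace ℝ (Fin d), ξ ≠ 0 := exists_ne 0
  have hξ₀n : 0 < ‖ξ₀‖ := norm_pos_iff.2 hξ₀
  have hlp0 : 0 < lp := by
    obtain ⟨h1, h2, -⟩ := hexp ξ₀ 1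
    simp only [pow_one] at h1 h2
    have hble := le_trans h1 h2
    by_contra hlp
    push_neg at hlp
    have hA1 : b * lp * ‖ξ₀‖ ≤ 0 :=
      mul_nonpos_of_nonpos_of_nonneg (mul_nonpos_of_nonneg_of_nonpos hb.le hlp) (norm_nonneg _)
    have hA2 : 0 < 1 / b * lm * ‖ξ₀‖ := by positivity
    linarith
  -- R > 0
  obtain ⟨η₀, hη₀⟩ := hQne
  have hR0 : 0 < R := lt_of_lt_of_le hr (le_trans (hrR η₀ hη₀).1 (hrR η₀ hη₀).2)
  have hlmz : (0 : ℝ) < lm ^ (n - m) := zpow_pos hlm0 _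
  have hlpz : (0 : ℝ) < lp ^ (n - m) := zpow_pos hlp0 _
  have hbase : (0 : ℝ) < 1 + lp ^ (n - m) * r / b := by positivity
  set K : ℝ := C * min 1 ((b * lm ^ (n - m) * R) ^ L) / (1 + lp ^ (n - m) * r / b) ^ N with hKdef
  have hXL : (0 : ℝ) ≤ b * lm ^ (n - m) * R := by positivity
  have hK0 : 0 ≤ K := by
    apply div_nonneg _ (Real.rpow_nonneg hbase.le N)
    exact mul_nonneg hC.le (le_min zero_le_one (Real.rpow_nonneg hXL L))
  set S : Set (EuclideanSpace ℝ (Fin d)) := matImage (A ^ n) Q₀ with hSdef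
  set T : EuclideanSpace ℝ (Fin d) → EuclideanSpace ℝ (Fin d) :=
    fun ξ => Matrix.toEuclideanLin (A ^ (-m)) ξ with hTdef
  -- pointwise bound
  have hpt : ∀ ξ ∈ S, ‖g (T ξ)‖ ≤ K := by
    rintro _ ⟨η, hη, rfl⟩
    have hcomp : T (Matrix.toEuclideanLin (A ^ n) η) = Matrix.toEuclideanLin (A ^ (n - m)) η := by
      rw [hTdef]
      simp only
      rw [← toEL_mul, ← Matrix.zpow_add hdet, neg_add_eq_sub]
    rw [hcomp]
    set u := Matrix.toEuclideanLin (A ^ (n - m)) η with hu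
    obtain ⟨hrη, hRη⟩ := hrR η hη
    obtain ⟨-, -, hlow, hupp⟩ := hexp η j
    rw [← hnm] at hlow hupp
    have h1 : lp ^ (n - m) * r / b ≤ ‖u‖ := by
      calc lp ^ (n - m) * r / b = (1 / b) * lp ^ (n - m) * r := by ring
        _ ≤ (1 / b) * lp ^ (n - m) * ‖η‖ := by
            apply mul_le_mul_of_nonneg_left hrη (by positivity)
        _ ≤ ‖u‖ := hlow
    have h2 : ‖u‖ ≤ b * lm ^ (n - m) * R := by
      calc ‖u‖ ≤ b * lm ^ (n - m) * ‖η‖ := hupp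
        _ ≤ b * lm ^ (n - m) * R := by
            apply mul_le_mul_of_nonneg_left hRη (by positivity)
    have hmin : min 1 (‖u‖ ^ L) ≤ min 1 ((b * lm ^ (n - m) * R) ^ L) :=
      min_le_min le_rfl (Real.rpow_le_rpow (norm_nonneg u) h2 hL.le)
    have hexpN : (1 + ‖u‖) ^ (-N) ≤ (1 + lp ^ (n - m) * r / b) ^ (-N) := by
      rw [Real.rpow_neg (by positivity), Real.rpow_neg hbase.le]
      apply inv_anti₀ (Real.rpow_pos_of_pos hbase N)
      exact Real.rpow_le_rpow hbase.le (by linarith) hN.le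
    calc ‖g u‖ ≤ C * min 1 (‖u‖ ^ L) * (1 + ‖u‖) ^ (-N) := hg u
      _ ≤ C * min 1 ((b * lm ^ (n - m) * R) ^ L) * (1 + lp ^ (n - m) * r / b) ^ (-N) := by
          apply mul_le_mul (mul_le_mul_of_nonneg_left hmin hC.le) hexpN
            (Real.rpow_nonneg (by positivity) _)
            (mul_nonneg hC.le (le_min zero_le_one (Real.rpow_nonneg hXL L)))
      _ = K := by rw [hKdef, Real.rpow_neg hbase.le, ← div_eq_mul_inv]
  -- measure facts
  have hTn : Continuous (Matrix.toEuclideanLin (A ^ n) : EuclideanSpace ℝ (Fin d) →ₗ[ℝ] _) :=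
    LinearMap.continuous_of_finiteDimensional _
  have hSb : Bornology.IsBounded S := by
    rw [hSdef, matImage]
    exact ((Matrix.toEuclideanLin (A ^ n)).toContinuousLinearMap.lipschitz).isBounded_image hQbdd
  have hSfin : volume S < ⊤ := hSb.measure_lt_top
  have hTc : Continuous T := by
    rw [hTdef]
    exact LinearMap.continuous_of_finiteDimensional _
  have hmeas : AEStronglyMeasurable (fun ξ => ‖g (T ξ)‖) (volume.restrict S) :=
    (continuous_norm.measurable.comp (hgm.comp hTc.measurable)).aestronglyMeasurable
  have hInn : 0 ≤ ∫ ξ in S, ‖g (T ξ)‖ :=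
    integral_nonneg fun _ => norm_nonneg _
  have hI : ∫ ξ in S, ‖g (T ξ)‖ ≤ K * (volume S).toReal := by
    have h := norm_setIntegral_le_of_norm_le_const (f := fun ξ => ‖g (T ξ)‖) (C := K) hSfin
      (fun x hx => by
        rw [Real.norm_eq_abs, abs_of_nonneg (norm_nonneg _)]
        exact hpt x hx)
    calc (∫ ξ in S, ‖g (T ξ)‖) ≤ ‖∫ ξ in S, ‖g (T ξ)‖‖ :=
          le_abs_self _
      _ ≤ K * (volume S).toReal := h
  have havg0 : 0 ≤ (volume S).toReal⁻¹ * ∫ ξ in S, ‖g (T ξ)‖ :=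
    mul_nonneg (inv_nonneg.mpr ENNReal.toReal_nonneg) hInn
  have havg : (volume S).toReal⁻¹ * (∫ ξ in S, ‖g (T ξ)‖) ≤ K := by
    rcases eq_or_lt_of_le (ENNReal.toReal_nonneg (a := volume S)) with h0 | h0
    · rw [← h0]
      simpa using hK0
    · calc (volume S).toReal⁻¹ * (∫ ξ in S, ‖g (T ξ)‖)
          ≤ (volume S).toReal⁻¹ * (K * (volume S).toReal) :=
            mul_le_mul_of_nonneg_left hI (inv_nonneg.mpr ENNReal.toReal_nonneg)
        _ = K := by field_simp
  -- operator norm bound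
  have hop : opNorm (A ^ (n - m)) ≤ b * lm ^ (n - m) := by
    apply ContinuousLinearMap.opNorm_le_bound _ (by positivity)
    intro x
    have h := (hexp x j).2.2.2
    rw [← hnm] at h
    have hco : (Matrix.toEuclideanCLM (𝕜 := ℝ) (A ^ (n - m))) x
        = Matrix.toEuclideanLin (A ^ (n - m)) x :=
      LinearMap.congr_fun (Matrix.coe_toEuclideanCLM_eq_toEuclideanLin _) x
    rw [hco]
    exact h
  -- assemble
  rw [hM m n]
  have hF1 : 0 ≤ a ^ (τ * ((m : ℝ) - (n : ℝ))) := Real.rpow_nonneg ha.le _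
  have hXσ : (1 + opNorm (A ^ (n - m))) ^ σ ≤ (1 + b * lm ^ (n - m)) ^ σ := by
    apply Real.rpow_le_rpow _ (by linarith) hσ.le
    have : 0 ≤ opNorm (A ^ (n - m)) := norm_nonneg _
    linarith
  have hYτ : ((volume S).toReal⁻¹ * ∫ ξ in S, ‖g (T ξ)‖) ^ τ ≤ K ^ τ :=
    Real.rpow_le_rpow havg0 havg hτ.le
  calc a ^ (τ * ((m : ℝ) - (n : ℝ))) * (1 + opNorm (A ^ (n - m))) ^ σ *
        ((volume S).toReal⁻¹ * ∫ ξ in S, ‖g (T ξ)‖) ^ τ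
      ≤ a ^ (τ * ((m : ℝ) - (n : ℝ))) * (1 + b * lm ^ (n - m)) ^ σ * K ^ τ := by
        apply mul_le_mul (mul_le_mul_of_nonneg_left hXσ hF1) hYτ
          (Real.rpow_nonneg havg0 _)
          (mul_nonneg hF1 (Real.rpow_nonneg (by positivity) _))
    _ = _ := by rw [hKdef]
end
end

section
/- Let ε, p₀, q₀ ∈ (0,1], p ∈ [p₀, ∞], q ∈ [q₀, ∞], and set τ := min{1, p, q}, θ := max{1/p − 1, 0}, N := ⌈(d+ε)/min{1,p}⌉, and σ := τ·(d+1) if p ≥ 1 and σ := τ·(d/p + ⌈(d+ε)/p⌉) if p < 1. Let A be a d×d real expansive matrix, s ∈ ℤ, Q₀ an open bounded subset of ℝ^d with |ξ| < R₀ on Q₀ and positive Lebesgue measure, and Q₁ an open bounded subset of ℝ^d with 0 < r ≤ |ξ| ≤ R on Q₁; set T₀ := I_d, T_i := A^{i−1} for i ≥ 1, Q_i := A^{i−1}Q₁ for i ≥ 1, w₀ := 1 and w_i := |det A|^{s·(i−1)} for i ≥ 1. Let ρ₁, ρ₂ : ℝ^d → (0, ∞) satisfy ρ₁(ξ) ≤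 C·(1+|ξ|)^{−K₂} and ρ₂(ξ) ≤ C·min{1, |ξ|^{L₂}}·(1+|ξ|)^{−N₂} for all ξ ∈ ℝ^d, where C > 0, K₂ > log_{λ₋}(λ₊^{σ/τ}/|det A|^{θ−s}), L₂ > (θ−s)·log_{λ₋}|det A| and N₂ > log_{λ₋}(λ₊^{σ/τ}/|det A|^{θ−s}). Define, for i, j ∈ ℕ₀, N²_{ij} := ( (w_i/w_j)·(|det T_j|/|det T_i|)^θ )^τ · (1 + ‖T_j^{−1}T_i‖)^σ · ( |det T_i|^{−1} ∫_{Q_i} ρ_{n_j}(T_j^{−1} ξ) dξ )^τ, where n₀ := 1 and n_j := 2 for j ≥ 1. Then sup_{i∈ℕ₀} Σ_{j∈ℕ₀} N²_{ij} < ∞ and sup_{j∈ℕ₀} Σ_{i∈ℕ₀} N²_{ij} < ∞. -/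
open MeasureTheory

noncomputable section

open scoped ENNReal

section Helpers

/-- `(x^n)^t = (x^t)^n` for nonneg base, mixing monoid pow and rpow. -/
lemma pow_rpow_comm {x : ℝ} (hx : 0 ≤ x) (t : ℝ) (n : ℕ) : (x ^ n) ^ t = (x ^ t) ^ n := by
  rw [← Real.rpow_natCast x n, ← Real.rpow_mul hx, mul_comm, Real.rpow_mul hx,
    Real.rpow_natCast]

/-- Gelfand-type estimate: if all spectral values of `a` have norm `< t`, then
`‖a^n‖ ≤ c * t^n` for some constant `c ≥ 1`. -/
lemma exists_norm_pow_le {B : Type*} [NormedRing B] [NormedAlgebra ℂ B] [CompleteSpace B]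
    (a : B) {t : ℝ} (ht0 : 0 < t) (ht : ∀ μ ∈ spectrum ℂ a, ‖μ‖ < t) :
    ∃ c : ℝ, 1 ≤ c ∧ ∀ n : ℕ, ‖a ^ n‖ ≤ c * t ^ n := by
  have hrad : spectralRadius ℂ a < ENNReal.ofReal t := by
    rcases Set.eq_empty_or_nonempty (spectrum ℂ a) with hempty | hne
    · have : spectralRadius ℂ a = 0 := by
        simp [spectralRadius, hempty]
      rw [this]
      exact ENNReal.ofReal_pos.2 ht0
    · obtain ⟨μ₀, hμ₀mem, hμ₀max⟩ :=
        (spectrum.isCompact a).exists_isMaxOn hne (continuous_norm.continuousOn)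
      have hle : spectralRadius ℂ a ≤ (‖μ₀‖₊ : ENNReal) := by
        refine iSup₂_le fun k hk => ?_
        exact_mod_cast hμ₀max hk
      refine lt_of_le_of_lt hle ?_
      rw [← ENNReal.ofReal_coe_nnreal, coe_nnnorm]
      exact (ENNReal.ofReal_lt_ofReal_iff ht0).2 (ht μ₀ hμ₀mem)
  have hev := (spectrum.pow_nnnorm_pow_one_div_tendsto_nhds_spectralRadius a).eventually_lt_const
    hrad
  obtain ⟨N, hN⟩ := Filter.eventually_atTop.1 (hev.and (Filter.eventually_ge_atTop 1))
  have key : ∀ n, N ≤ n → ‖a ^ n‖ ≤ t ^ n := by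
    intro n hn
    obtain ⟨h1, h2⟩ := hN n hn
    have hn0 : (n : ℝ) ≠ 0 := Nat.cast_ne_zero.2 (by omega)
    have h3 : ((‖a ^ n‖₊ : ENNReal) ^ (1 / (n:ℝ))) ^ (n:ℝ) ≤ (ENNReal.ofReal t) ^ (n:ℝ) :=
      ENNReal.rpow_le_rpow h1.le (by positivity)
    rw [← ENNReal.rpow_mul, one_div_mul_cancel hn0, ENNReal.rpow_one,
      ENNReal.rpow_natCast (ENNReal.ofReal t) n, ← ENNReal.ofReal_pow ht0.le,
      ← ENNReal.ofReal_coe_nnreal, coe_nnnorm] at h3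
    exact (ENNReal.ofReal_le_ofReal_iff (by positivity)).1 h3
  set c : ℝ := 1 + ∑ k ∈ Finset.range N, ‖a ^ k‖ / t ^ k with hc
  have hc1 : 1 ≤ c := by
    have : 0 ≤ ∑ k ∈ Finset.range N, ‖a ^ k‖ / t ^ k :=
      Finset.sum_nonneg fun k _ => by positivity
    rw [hc]; linarith
  refine ⟨c, hc1, fun n => ?_⟩
  rcases le_or_gt N n with h | h
  · calc ‖a ^ n‖ ≤ t ^ n := key n h
      _ ≤ c * t ^ n := le_mul_of_one_le_left (by positivity) hc1
  · have hmem : n ∈ Finset.range N := Finset.mem_range.2 h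
    have hterm : ‖a ^ n‖ / t ^ n ≤ c := by
      have h1 : ‖a ^ n‖ / t ^ n ≤ ∑ k ∈ Finset.range N, ‖a ^ k‖ / t ^ k :=
        Finset.single_le_sum (f := fun k => ‖a ^ k‖ / t ^ k) (fun k _ => by positivity) hmem
      rw [hc]; linarith
    have htn : (0:ℝ) < t ^ n := by positivity
    calc ‖a ^ n‖ = ‖a ^ n‖ / t ^ n * t ^ n := by field_simp
      _ ≤ c * t ^ n := mul_le_mul_of_nonneg_right hterm htn.le

end Helpers

/-- Summation machine: if `f i j ≤ M * q^(i-j) * q^(j-i)` (truncated subtraction)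
with `0 < q < 1` and `f` nonneg, then the row sums are uniformly bounded. -/
lemma row_sum_bound {f : ℕ → ℕ → ℝ} {M q : ℝ} (hM : 0 ≤ M) (hq0 : 0 < q) (hq1 : q < 1)
    (hf0 : ∀ i j, 0 ≤ f i j) (hf : ∀ i j, f i j ≤ M * (q ^ (i - j) * q ^ (j - i))) :
    ∃ S : ℝ, ∀ i : ℕ, Summable (fun j : ℕ => f i j) ∧ ∑' j : ℕ, f i j ≤ S := by
  have hgeo : Summable fun n : ℕ => q ^ n := summable_geometric_of_lt_one hq0.le hq1
  have htgeo : ∑' n : ℕ, q ^ n = (1 - q)⁻¹ := tsum_geometric_of_lt_one hq0.le hq1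
  have hgs : ∀ i : ℕ, Summable fun j : ℕ => q ^ (i - j) * q ^ (j - i) := by
    intro i
    refine (summable_nat_add_iff (f := fun j : ℕ => q ^ (i - j) * q ^ (j - i)) i).1 ?_
    have : (fun n : ℕ => q ^ (i - (n + i)) * q ^ (n + i - i)) = fun n : ℕ => q ^ n := by
      funext n
      simp [Nat.sub_eq_zero_of_le (Nat.le_add_left i n)]
    rw [this]
    exact hgeo
  have htsum : ∀ i : ℕ, ∑' j : ℕ, q ^ (i - j) * q ^ (j - i) ≤ 2 * (1 - q)⁻¹ := by
    intro i
    have hsplit := Summable.sum_add_tsum_nat_add (f := fun j : ℕ => q ^ (i - j) * q ^ (j - i))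
      (i + 1) (hgs i)
    rw [← hsplit]
    have hpart1 : ∑ j ∈ Finset.range (i + 1), q ^ (i - j) * q ^ (j - i) ≤ (1 - q)⁻¹ := by
      have e1 : ∀ j ∈ Finset.range (i + 1), q ^ (i - j) * q ^ (j - i) = q ^ (i - j) := by
        intro j hj
        rw [Finset.mem_range] at hj
        rw [Nat.sub_eq_zero_of_le (show j ≤ i by omega), pow_zero, mul_one]
      have e3 : ∑ x ∈ Finset.range (i + 1), q ^ (i - x) = ∑ x ∈ Finset.range (i + 1), q ^ x := by
        rw [← Finset.sum_range_reflect (fun t => q ^ t) (i + 1)]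
        refine Finset.sum_congr rfl fun j hj => ?_
        rw [Finset.mem_range] at hj
        have e4 : i + 1 - 1 - j = i - j := by omega
        rw [e4]
      rw [Finset.sum_congr rfl e1, e3]
      exact le_trans (Summable.sum_le_tsum _ (fun k _ => by positivity) hgeo) htgeo.le
    have hs2 : Summable fun j : ℕ => q ^ (i - (j + (i + 1))) * q ^ (j + (i + 1) - i) :=
      (summable_nat_add_iff (f := fun j : ℕ => q ^ (i - j) * q ^ (j - i)) (i + 1)).2 (hgs i)
    have hpart2 : ∑' j : ℕ, q ^ (i - (j + (i + 1))) * q ^ (j + (i + 1) - i) ≤ (1 - q)⁻¹ := by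
      have hle : ∀ j : ℕ, q ^ (i - (j + (i + 1))) * q ^ (j + (i + 1) - i) ≤ q ^ j := by
        intro j
        rw [Nat.sub_eq_zero_of_le (show i ≤ j + (i + 1) by omega), pow_zero, one_mul]
        exact pow_le_pow_of_le_one hq0.le hq1.le (by omega)
      exact le_trans (Summable.tsum_le_tsum hle hs2 hgeo) htgeo.le
    linarith
  refine ⟨M * (2 * (1 - q)⁻¹), fun i => ?_⟩
  have hsummable : Summable fun j : ℕ => f i j :=
    Summable.of_nonneg_of_le (hf0 i) (hf i) ((hgs i).mul_left M)
  refine ⟨hsummable, ?_⟩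
  calc ∑' j : ℕ, f i j ≤ ∑' j : ℕ, M * (q ^ (i - j) * q ^ (j - i)) :=
        Summable.tsum_le_tsum (hf i) hsummable ((hgs i).mul_left M)
    _ = M * ∑' j : ℕ, q ^ (i - j) * q ^ (j - i) := tsum_mul_left
    _ ≤ M * (2 * (1 - q)⁻¹) := mul_le_mul_of_nonneg_left (htsum i) hM

section MatrixHelpers

variable {d : ℕ}

open scoped Matrix.Norms.L2Operator

lemma toEuclideanLin_mul_apply (M N : Matrix (Fin d) (Fin d) ℝ)
    (x : EuclideanSpace ℝ (Fin d)) :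
    Matrix.toEuclideanLin (M * N) x = Matrix.toEuclideanLin M (Matrix.toEuclideanLin N x) := by
  simp [Matrix.toEuclideanLin_apply, Matrix.mulVec_mulVec]

lemma toEuclideanLin_one_apply (x : EuclideanSpace ℝ (Fin d)) :
    Matrix.toEuclideanLin (1 : Matrix (Fin d) (Fin d) ℝ) x = x := by
  simp [Matrix.toEuclideanLin_apply]

lemma norm_toEuclideanLin_le (M : Matrix (Fin d) (Fin d) ℝ) (x : EuclideanSpace ℝ (Fin d)) :
    ‖Matrix.toEuclideanLin M x‖ ≤ opNorm M * ‖x‖ := by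
  have h : Matrix.toEuclideanLin M x = Matrix.toEuclideanCLM (𝕜 := ℝ) M x := by
    rw [← Matrix.coe_toEuclideanCLM_eq_toEuclideanLin]
    rfl
  rw [h]
  exact (Matrix.toEuclideanCLM (𝕜 := ℝ) M).le_opNorm x

lemma opNorm_nonneg (M : Matrix (Fin d) (Fin d) ℝ) : 0 ≤ opNorm M := norm_nonneg _

lemma isUnit_det_of_expansive {A : Matrix (Fin d) (Fin d) ℝ} (hA : IsExpansive A) :
    IsUnit A.det := by
  rw [isUnit_iff_ne_zero]
  intro h
  have hdet : (A.map Complex.ofReal).det = 0 := by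
    have h2 := RingHom.map_det Complex.ofRealHom A
    simp only [RingHom.mapMatrix_apply] at h2
    rw [show (A.map Complex.ofReal) = A.map ⇑Complex.ofRealHom from rfl, ← h2, h]
    simp
  have hunit : ¬ IsUnit (A.map Complex.ofReal) := by
    intro hu
    rw [Matrix.isUnit_iff_isUnit_det, hdet] at hu
    exact (not_isUnit_zero : ¬ IsUnit (0:ℂ)) hu
  have h0 : (0 : ℂ) ∈ spectrum ℂ (A.map Complex.ofReal) := spectrum.zero_mem_iff ℂ |>.2 hunit
  have := hA 0 h0
  simp at this
  linarith

lemma norm_complexify (v : EuclideanSpace ℝ (Fin d)) :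
    ‖((WithLp.equiv 2 _).symm (fun i => ((v i : ℝ) : ℂ)) : EuclideanSpace ℂ (Fin d))‖ = ‖v‖ := by
  rw [EuclideanSpace.norm_eq, EuclideanSpace.norm_eq]
  congr 1
  refine Finset.sum_congr rfl fun i _ => ?_
  simp

lemma opNorm_le_l2norm_map (M : Matrix (Fin d) (Fin d) ℝ) :
    opNorm M ≤ ‖M.map Complex.ofReal‖ := by
  refine ContinuousLinearMap.opNorm_le_bound _ (norm_nonneg _) fun x => ?_
  set xc : EuclideanSpace ℂ (Fin d) := (WithLp.equiv 2 _).symm (fun i => ((x i : ℝ) : ℂ))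
    with hxc
  have happ : Matrix.toEuclideanCLM (𝕜 := ℂ) (M.map Complex.ofReal) xc
      = (WithLp.equiv 2 _).symm
          (fun i => (((Matrix.toEuclideanCLM (𝕜 := ℝ) M x) i : ℝ) : ℂ)) := by
    have hx' : x = (WithLp.equiv 2 _).symm (WithLp.equiv 2 _ x) :=
      ((WithLp.equiv 2 _).symm_apply_apply x).symm
    rw [hxc]
    ext i
    simp [WithLp.equiv_symm_apply, Matrix.mulVec, dotProduct, Matrix.map_apply, Complex.ofReal_sum]
  have h1 : ‖Matrix.toEuclideanCLM (𝕜 := ℝ) M x‖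
      = ‖Matrix.toEuclideanCLM (𝕜 := ℂ) (M.map Complex.ofReal) xc‖ := by
    rw [happ, norm_complexify]
  rw [Matrix.cstar_norm_def, h1]
  calc ‖Matrix.toEuclideanCLM (𝕜 := ℂ) (M.map Complex.ofReal) xc‖
      ≤ ‖Matrix.toEuclideanCLM (𝕜 := ℂ) (M.map Complex.ofReal)‖ * ‖xc‖ :=
        ContinuousLinearMap.le_opNorm _ _
    _ = ‖Matrix.toEuclideanCLM (𝕜 := ℂ) (M.map Complex.ofReal)‖ * ‖x‖ := by
        rw [hxc, norm_complexify]

end MatrixHelpers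

section Growth

open scoped Matrix.Norms.L2Operator

lemma expansive_growth {d : ℕ} (hd : 1 ≤ d) (A : Matrix (Fin d) (Fin d) ℝ)
    (hA : IsExpansive A) (lm lp : ℝ) (hspec : SpecBound A lm lp) :
    1 < lp ∧ ∃ b : ℝ, 1 ≤ b ∧ (∀ n : ℕ, opNorm (A ^ n) ≤ b * lp ^ n) ∧
      (∀ n : ℕ, opNorm ((A ^ n)⁻¹) ≤ b * (lm ^ n)⁻¹) := by
  obtain ⟨hlm, hs⟩ := hspec
  haveI : Nonempty (Fin d) := ⟨⟨0, by omega⟩⟩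
  haveI : CompleteSpace (Matrix (Fin d) (Fin d) ℂ) := FiniteDimensional.complete ℂ _
  set Ac := A.map Complex.ofReal with hAc
  obtain ⟨μ, hμ⟩ := spectrum.nonempty Ac
  have hlp : 1 < lp := lt_trans (lt_trans hlm (hs μ hμ).1) (hs μ hμ).2
  have hdetA : IsUnit A.det := isUnit_det_of_expansive hA
  have hdetAc : IsUnit Ac.det := by
    have h2 := RingHom.map_det Complex.ofRealHom A
    simp only [RingHom.mapMatrix_apply] at h2
    rw [hAc, show A.map Complex.ofReal = A.map ⇑Complex.ofRealHom from rfl, ← h2]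
    rw [isUnit_iff_ne_zero]
    simpa using hdetA.ne_zero
  have hAcUnit : IsUnit Ac := (Matrix.isUnit_iff_isUnit_det Ac).2 hdetAc
  obtain ⟨c₁, hc₁, hb₁⟩ := exists_norm_pow_le Ac (lt_trans zero_lt_one hlp)
    (fun ν hν => by exact (hs ν hν).2)
  have hlm0 : (0:ℝ) < lm := lt_trans zero_lt_one hlm
  have hspecinv : ∀ ν ∈ spectrum ℂ Ac⁻¹, ‖ν‖ < lm⁻¹ := by
    intro ν hν
    set u := hAcUnit.unit with hu
    have hcoe : (↑u⁻¹ : Matrix (Fin d) (Fin d) ℂ) = Ac⁻¹ := by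
      rw [Matrix.coe_units_inv, hAcUnit.unit_spec]
    rw [← hcoe] at hν
    have hν0 : ν ≠ 0 := spectrum.ne_zero_of_mem_of_unit hν
    set νu : ℂˣ := Units.mk0 ν hν0 with hνu
    have hinv : (↑νu⁻¹ : ℂ) ∈ spectrum ℂ (↑u : Matrix (Fin d) (Fin d) ℂ) := by
      rw [spectrum.inv_mem_iff]
      simpa [hνu] using hν
    rw [hAcUnit.unit_spec] at hinv
    have h1 : lm < ‖(↑νu⁻¹ : ℂ)‖ := (hs _ hinv).1
    have h2 : ‖(↑νu⁻¹ : ℂ)‖ = ‖ν‖⁻¹ := by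
      simp [hνu, map_inv₀]
    rw [h2] at h1
    have hν0' : (0:ℝ) < ‖ν‖ := norm_pos_iff.2 hν0
    calc ‖ν‖ = (‖ν‖⁻¹)⁻¹ := (inv_inv _).symm
      _ < lm⁻¹ := by
        apply inv_strictAnti₀ hlm0 h1
  obtain ⟨c₂, hc₂, hb₂⟩ := exists_norm_pow_le Ac⁻¹ (inv_pos.2 hlm0) hspecinv
  have hmap_pow : ∀ n : ℕ, (A ^ n).map Complex.ofReal = Ac ^ n := by
    intro n
    have := map_pow (Complex.ofRealHom.mapMatrix) A n
    simp only [RingHom.mapMatrix_apply] at this; exact this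
  have hmap_inv : ∀ n : ℕ, ((A ^ n)⁻¹).map Complex.ofReal = (Ac⁻¹) ^ n := by
    intro n
    rw [Matrix.inv_pow', ← hmap_pow n]
    have hleft : ((A ^ n)⁻¹).map Complex.ofReal * (A ^ n).map Complex.ofReal = 1 := by
      have hdet : IsUnit (A ^ n).det := by
        rw [Matrix.det_pow]; exact hdetA.pow n
      have := congrArg (fun M => M.map ⇑Complex.ofRealHom) (Matrix.nonsing_inv_mul _ hdet)
      simp [Matrix.map_mul] at this; exact this
    exact (Matrix.inv_eq_left_inv hleft).symm
  refine ⟨hlp, max c₁ c₂, le_trans hc₁ (le_max_left _ _), fun n => ?_, fun n => ?_⟩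
  · calc opNorm (A ^ n) ≤ ‖(A ^ n).map Complex.ofReal‖ := opNorm_le_l2norm_map _
      _ = ‖Ac ^ n‖ := by rw [hmap_pow]
      _ ≤ c₁ * lp ^ n := hb₁ n
      _ ≤ max c₁ c₂ * lp ^ n :=
        mul_le_mul_of_nonneg_right (le_max_left _ _) (by positivity)
  · calc opNorm ((A ^ n)⁻¹) ≤ ‖((A ^ n)⁻¹).map Complex.ofReal‖ := opNorm_le_l2norm_map _
      _ = ‖(Ac⁻¹) ^ n‖ := by rw [hmap_inv]
      _ ≤ c₂ * (lm⁻¹) ^ n := hb₂ n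
      _ ≤ max c₁ c₂ * (lm ^ n)⁻¹ := by
        rw [← inv_pow]
        exact mul_le_mul_of_nonneg_right (le_max_right _ _) (by positivity)

end Growth

section MeasureHelpers

variable {d : ℕ}

lemma matImage_eq_preimage {M : Matrix (Fin d) (Fin d) ℝ} (hM : IsUnit M.det)
    (S : Set (EuclideanSpace ℝ (Fin d))) :
    matImage M S = (Matrix.toEuclideanLin M⁻¹) ⁻¹' S := by
  ext x
  constructor
  · rintro ⟨η, hη, rfl⟩
    have : Matrix.toEuclideanLin M⁻¹ (Matrix.toEuclideanLin M η) = η := by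
      rw [← toEuclideanLin_mul_apply, Matrix.nonsing_inv_mul _ hM, toEuclideanLin_one_apply]
    rwa [Set.mem_preimage, this]
  · intro hx
    refine ⟨Matrix.toEuclideanLin M⁻¹ x, hx, ?_⟩
    rw [← toEuclideanLin_mul_apply, Matrix.mul_nonsing_inv _ hM, toEuclideanLin_one_apply]

lemma measurableSet_matImage {M : Matrix (Fin d) (Fin d) ℝ} (hM : IsUnit M.det)
    {S : Set (EuclideanSpace ℝ (Fin d))} (hS : IsOpen S) :
    MeasurableSet (matImage M S) := by
  rw [matImage_eq_preimage hM]
  exact (hS.preimage (LinearMap.continuous_of_finiteDimensional _)).measurableSet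

lemma volume_matImage (M : Matrix (Fin d) (Fin d) ℝ) (S : Set (EuclideanSpace ℝ (Fin d))) :
    volume (matImage M S) = ENNReal.ofReal |M.det| * volume S := by
  have hdet : LinearMap.det (Matrix.toEuclideanLin M) = M.det := by
    rw [Matrix.toEuclideanLin_eq_toLin, LinearMap.det_toLin]
  rw [matImage, Measure.addHaar_image_linearMap, hdet]

lemma setIntegral_le_of_bound {S : Set (EuclideanSpace ℝ (Fin d))} (hS : MeasurableSet S)
    (hfin : volume S ≠ ⊤) {f : EuclideanSpace ℝ (Fin d) → ℝ} {c : ℝ}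
    (h0 : ∀ x, 0 ≤ f x) (hb : ∀ x ∈ S, f x ≤ c) :
    ∫ x in S, f x ≤ (volume S).toReal * c := by
  have hint : Integrable (fun _ : EuclideanSpace ℝ (Fin d) => c) (volume.restrict S) := by
    rw [integrable_const_iff]
    right
    constructor
    rw [Measure.restrict_apply_univ]
    exact hfin.lt_top
  calc ∫ x in S, f x ≤ ∫ _ in S, c := by
        refine integral_mono_of_nonneg (Filter.Eventually.of_forall h0) hint ?_
        exact (ae_restrict_iff' hS).2 (Filter.Eventually.of_forall hb)
    _ = (volume S).toReal * c := by
        rw [setIntegral_const, smul_eq_mul, measureReal_def]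

lemma setIntegral_nonneg' {S : Set (EuclideanSpace ℝ (Fin d))}
    {f : EuclideanSpace ℝ (Fin d) → ℝ} (h0 : ∀ x, 0 ≤ f x) :
    0 ≤ ∫ x in S, f x :=
  integral_nonneg h0

end MeasureHelpers

set_option maxHeartbeats 4000000 in

/-- Condition (5b) of the atomic-decomposition theorem holds for the anisotropic inhomogeneous
Besov setting: both iterated sums of `N²_{ij}` are finite. -/
theorem inhomogeneous_atoms_condition
    (d : ℕ) (hd : 1 ≤ d)
    (ε p₀ q₀ : ℝ) (hε : ε ∈ Set.Ioc (0 : ℝ) 1) (hp₀ : p₀ ∈ Set.Ioc (0 : ℝ) 1)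
    (hq₀ : q₀ ∈ Set.Ioc (0 : ℝ) 1)
    (p q : ℝ≥0∞) (hp : ENNReal.ofReal p₀ ≤ p) (hq : ENNReal.ofReal q₀ ≤ q)
    (τ θ : ℝ) (hτ : τ = (min 1 (min p q)).toReal) (hθ : θ = max ((p⁻¹).toReal - 1) 0)
    (Nn : ℕ) (hNn : Nn = ⌈((d : ℝ) + ε) / (min 1 p).toReal⌉₊)
    (σ : ℝ) (hσ : σ = if 1 ≤ p then τ * ((d : ℝ) + 1)
      else τ * ((d : ℝ) / p.toReal + (⌈((d : ℝ) + ε) / p.toReal⌉₊ : ℝ)))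
    (A : Matrix (Fin d) (Fin d) ℝ) (hA : IsExpansive A)
    (lm lp : ℝ) (hspec : SpecBound A lm lp)
    (s : ℤ)
    (Q₀ : Set (EuclideanSpace ℝ (Fin d))) (hQ₀open : IsOpen Q₀)
    (hQ₀bdd : Bornology.IsBounded Q₀) (hQ₀vol : 0 < volume Q₀)
    (R₀ : ℝ) (hR₀ : ∀ ξ ∈ Q₀, ‖ξ‖ < R₀)
    (Q₁ : Set (EuclideanSpace ℝ (Fin d))) (hQ₁open : IsOpen Q₁)
    (hQ₁bdd : Bornology.IsBounded Q₁)
    (r R : ℝ) (hr : 0 < r) (hrR : ∀ ξ ∈ Q₁, r ≤ ‖ξ‖ ∧ ‖ξ‖ ≤ R)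
    (T : ℕ → Matrix (Fin d) (Fin d) ℝ) (hT0 : T 0 = 1)
    (hTi : ∀ i : ℕ, 1 ≤ i → T i = A ^ ((i : ℤ) - 1))
    (Qs : ℕ → Set (EuclideanSpace ℝ (Fin d))) (hQs0 : Qs 0 = Q₀)
    (hQsi : ∀ i : ℕ, 1 ≤ i → Qs i = matImage (A ^ ((i : ℤ) - 1)) Q₁)
    (w : ℕ → ℝ) (hw0 : w 0 = 1)
    (hwi : ∀ i : ℕ, 1 ≤ i → w i = |A.det| ^ (s * ((i : ℤ) - 1)))
    (ρ₁ ρ₂ : EuclideanSpace ℝ (Fin d) → ℝ)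
    (hρ₁pos : ∀ ξ, 0 < ρ₁ ξ) (hρ₂pos : ∀ ξ, 0 < ρ₂ ξ)
    (C K₂ L₂ N₂ : ℝ) (hC : 0 < C)
    (hK₂ : Real.logb lm (lp ^ (σ / τ) / |A.det| ^ (θ - (s : ℝ))) < K₂)
    (hL₂ : (θ - (s : ℝ)) * Real.logb lm |A.det| < L₂)
    (hN₂ : Real.logb lm (lp ^ (σ / τ) / |A.det| ^ (θ - (s : ℝ))) < N₂)
    (hρ₁ : ∀ ξ : EuclideanSpace ℝ (Fin d), ρ₁ ξ ≤ C * (1 + ‖ξ‖) ^ (-K₂))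
    (hρ₂ : ∀ ξ : EuclideanSpace ℝ (Fin d),
      ρ₂ ξ ≤ C * min 1 (‖ξ‖ ^ L₂) * (1 + ‖ξ‖) ^ (-N₂))
    (N2 : ℕ → ℕ → ℝ)
    (hN2 : ∀ i j : ℕ, N2 i j =
      ((w i / w j) * (|(T j).det| / |(T i).det|) ^ θ) ^ τ *
        (1 + opNorm ((T j)⁻¹ * T i)) ^ σ *
        (|(T i).det|⁻¹ * ∫ ξ in Qs i,
          (if j = 0 then ρ₁ else ρ₂) (Matrix.toEuclideanLin (T j)⁻¹ ξ)) ^ τ) :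
    (∃ S : ℝ, ∀ i : ℕ, Summable (fun j : ℕ => N2 i j) ∧ ∑' j : ℕ, N2 i j ≤ S) ∧
    (∃ S : ℝ, ∀ j : ℕ, Summable (fun i : ℕ => N2 i j) ∧ ∑' i : ℕ, N2 i j ≤ S) := by
  classical
  -- basic positivity facts
  have hp0' : (0 : ℝ≥0∞) < p := lt_of_lt_of_le (ENNReal.ofReal_pos.2 hp₀.1) hp
  have hq0' : (0 : ℝ≥0∞) < q := lt_of_lt_of_le (ENNReal.ofReal_pos.2 hq₀.1) hq
  have hmin_pos : (0 : ℝ≥0∞) < min 1 (min p q) := lt_min one_pos (lt_min hp0' hq0')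
  have hmin_ne_top : min 1 (min p q) ≠ ⊤ :=
    ((min_le_left _ _).trans_lt (by simp : (1:ℝ≥0∞) < ⊤)).ne
  have hτ0 : 0 < τ := by rw [hτ]; exact ENNReal.toReal_pos hmin_pos.ne' hmin_ne_top
  have hτne : τ ≠ 0 := hτ0.ne'
  have hθ0 : 0 ≤ θ := by rw [hθ]; exact le_max_right _ _
  have hσ0 : 0 ≤ σ := by
    rw [hσ]
    split
    · exact mul_nonneg hτ0.le (by positivity)
    · exact mul_nonneg hτ0.le
        (add_nonneg (div_nonneg (Nat.cast_nonneg d) ENNReal.toReal_nonneg) (Nat.cast_nonneg _))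
  obtain ⟨hlm1, hsEig⟩ := hspec
  have hlm0 : (0:ℝ) < lm := lt_trans zero_lt_one hlm1
  -- dichotomy on L₂
  rcases lt_or_ge 0 L₂ with hL2pos | hL2le
  · exfalso
    have h := hρ₂ 0
    rw [norm_zero, Real.zero_rpow hL2pos.ne', min_eq_right zero_le_one, mul_zero,
      zero_mul] at h
    exact absurd ((hρ₂pos 0).trans_le h) (lt_irrefl 0)
  -- main case : L₂ ≤ 0
  have hAdet : IsUnit A.det := isUnit_det_of_expansive hA
  obtain ⟨hlp1, b, hb1, hbpow, hbinv⟩ := expansive_growth hd A hA lm lp ⟨hlm1, hsEig⟩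
  have hlp0 : (0:ℝ) < lp := lt_trans zero_lt_one hlp1
  have hb0 : (0:ℝ) < b := lt_of_lt_of_le zero_lt_one hb1
  set a : ℝ := |A.det| with ha
  have ha0 : 0 < a := abs_pos.2 hAdet.ne_zero
  -- consequences of the logarithmic hypotheses
  have hX0 : 0 < lp ^ (σ / τ) / a ^ (θ - (s:ℝ)) := by
    apply div_pos (Real.rpow_pos_of_pos hlp0 _) (Real.rpow_pos_of_pos ha0 _)
  have hK2 : lp ^ (σ / τ) / a ^ (θ - (s:ℝ)) < lm ^ K₂ :=
    (Real.logb_lt_iff_lt_rpow hlm1 hX0).1 hK₂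
  have hN2' : lp ^ (σ / τ) / a ^ (θ - (s:ℝ)) < lm ^ N₂ :=
    (Real.logb_lt_iff_lt_rpow hlm1 hX0).1 hN₂
  have haθs : a ^ (θ - (s:ℝ)) < 1 := by
    have h := lt_of_lt_of_le hL₂ hL2le
    rw [Real.logb] at h
    have hloglm : 0 < Real.log lm := Real.log_pos hlm1
    have hlog : (θ - (s:ℝ)) * Real.log a < 0 := by
      have e : (θ - (s:ℝ)) * Real.log a
          = ((θ - (s:ℝ)) * (Real.log a / Real.log lm)) * Real.log lm := by
        field_simp
      rw [e]
      exact mul_neg_of_neg_of_pos h hloglm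
    rw [Real.rpow_def_of_pos ha0, show (1:ℝ) = Real.exp 0 by simp]
    exact Real.exp_lt_exp.2 (by nlinarith [hlog])
  set α : ℝ := a ^ ((s:ℝ) - θ) with hα
  have hα0 : 0 < α := Real.rpow_pos_of_pos ha0 _
  have hα1 : 1 < α := by
    have hcomp : α * (a ^ (θ - (s:ℝ))) = 1 := by
      rw [hα, ← Real.rpow_add ha0]; simp
    have h2 : 0 < a ^ (θ - (s:ℝ)) := Real.rpow_pos_of_pos ha0 _
    by_contra hcon
    push_neg at hcon
    have h3 : α * (a ^ (θ - (s:ℝ))) ≤ 1 * (a ^ (θ - (s:ℝ))) :=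
      mul_le_mul_of_nonneg_right hcon h2.le
    rw [hcomp, one_mul] at h3
    linarith
  set u : ℝ := α ^ τ with hu
  have hu1 : 1 < u := (Real.one_lt_rpow_iff_of_pos hα0).2 (Or.inl ⟨hα1, hτ0⟩)
  have hu0 : 0 < u := lt_trans zero_lt_one hu1
  set E' : ℝ := min K₂ N₂ with hE'
  have hE'X : lp ^ (σ / τ) / a ^ (θ - (s:ℝ)) < lm ^ E' := by
    rcases le_total K₂ N₂ with h | h
    · rw [hE', min_eq_left h]; exact hK2
    · rw [hE', min_eq_right h]; exact hN2'
  have hX1 : 1 < lp ^ (σ / τ) / a ^ (θ - (s:ℝ)) := by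
    have h2 : 0 < a ^ (θ - (s:ℝ)) := Real.rpow_pos_of_pos ha0 _
    have h1le : (1:ℝ) ≤ lp ^ (σ / τ) :=
      Real.one_le_rpow hlp1.le (div_nonneg hσ0 hτ0.le)
    rw [one_lt_div h2]
    exact lt_of_lt_of_le haθs h1le
  have hK20 : 0 < K₂ := lt_trans (Real.logb_pos hlm1 hX1) hK₂
  have hN20 : 0 < N₂ := lt_trans (Real.logb_pos hlm1 hX1) hN₂
  have hE'0 : 0 < E' := lt_min hK20 hN20
  set β : ℝ := lm ^ E' with hβ
  have hβ1 : 1 < β := lt_trans hX1 hE'X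
  have hβ0 : 0 < β := lt_trans zero_lt_one hβ1
  set qp : ℝ := u * lp ^ σ / β ^ τ with hqp
  set qm : ℝ := u⁻¹ with hqm
  have hXτ : (lp ^ (σ / τ) / a ^ (θ - (s:ℝ))) ^ τ = lp ^ σ * u := by
    have e1 : lp ^ (σ / τ) / a ^ (θ - (s:ℝ)) = lp ^ (σ / τ) * α := by
      rw [hα, div_eq_mul_inv, ← Real.rpow_neg ha0.le, neg_sub]
    rw [e1, Real.mul_rpow (Real.rpow_nonneg hlp0.le _) hα0.le, ← Real.rpow_mul hlp0.le,
      div_mul_cancel₀ σ hτne, hu]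
  have hqp1 : qp < 1 := by
    rw [hqp, div_lt_one (Real.rpow_pos_of_pos hβ0 τ)]
    have h := Real.rpow_lt_rpow hX0.le hE'X hτ0
    rw [hXτ] at h
    calc u * lp ^ σ = lp ^ σ * u := mul_comm _ _
      _ < β ^ τ := h
  have hqp0 : 0 < qp :=
    div_pos (mul_pos hu0 (Real.rpow_pos_of_pos hlp0 σ)) (Real.rpow_pos_of_pos hβ0 τ)
  have hqm1 : qm < 1 := by
    rw [hqm, inv_lt_one_iff₀]
    right; exact hu1
  have hqm0 : 0 < qm := inv_pos.2 hu0
  set Qq : ℝ := max qp qm with hQdef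
  have hQ0 : 0 < Qq := lt_of_lt_of_le hqp0 (le_max_left _ _)
  have hQ1 : Qq < 1 := max_lt hqp1 hqm1
  -- uniform description of the data
  set m : ℕ → ℕ := fun i => i - 1 with hm
  have hTm : ∀ i, T i = A ^ (m i) := by
    intro i
    rcases Nat.eq_zero_or_pos i with h0 | h1
    · subst h0; rw [hT0]; simp [hm]
    · rw [hTi i h1]
      have e : ((i:ℤ) - 1) = ((m i : ℕ) : ℤ) := by simp [hm]; omega
      rw [e, zpow_natCast]
  have hdetpow : ∀ k : ℕ, IsUnit (A ^ k).det := fun k => by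
    rw [Matrix.det_pow]; exact hAdet.pow k
  have hdetT : ∀ i, |(T i).det| = a ^ (m i) := by
    intro i; rw [hTm i, Matrix.det_pow, abs_pow]
  have hdetTpos : ∀ i, 0 < |(T i).det| := fun i => by rw [hdetT]; positivity
  have hwα : ∀ i, w i = a ^ (s * (m i : ℤ)) := by
    intro i
    rcases Nat.eq_zero_or_pos i with h0 | h1
    · subst h0; rw [hw0]; simp [hm]
    · rw [hwi i h1]
      congr 1
      simp [hm]
      omega
  have hwpos : ∀ i, 0 < w i := fun i => by rw [hwα]; exact zpow_pos ha0 _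
  set Qt : ℕ → Set (EuclideanSpace ℝ (Fin d)) := fun i => if i = 0 then Q₀ else Q₁ with hQt
  have hQtopen : ∀ i, IsOpen (Qt i) := by
    intro i; rw [hQt]; dsimp only; split
    · exact hQ₀open
    · exact hQ₁open
  have hQsm : ∀ i, Qs i = matImage (A ^ (m i)) (Qt i) := by
    intro i
    rcases Nat.eq_zero_or_pos i with h0 | h1
    · subst h0
      rw [hQs0, hQt]
      simp only [if_pos rfl, hm]
      rw [show (0:ℕ) - 1 = 0 from rfl, pow_zero]
      ext x
      constructor
      · intro hx; exact ⟨x, hx, toEuclideanLin_one_apply x⟩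
      · rintro ⟨y, hy, rfl⟩; rwa [toEuclideanLin_one_apply]
    · rw [hQsi i h1, hQt]
      simp only [if_neg (Nat.pos_iff_ne_zero.1 h1)]
      congr 1
      have e : ((i:ℤ) - 1) = ((m i : ℕ) : ℤ) := by simp [hm]; omega
      rw [e, zpow_natCast]
  have hQsmeas : ∀ i, MeasurableSet (Qs i) := fun i => by
    rw [hQsm]; exact measurableSet_matImage (hdetpow _) (hQtopen i)
  have hQtfin : ∀ i, volume (Qt i) ≠ ⊤ := by
    intro i; rw [hQt]; dsimp only; split
    · exact hQ₀bdd.measure_lt_top.ne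
    · exact hQ₁bdd.measure_lt_top.ne
  have hQsvol : ∀ i, volume (Qs i) = ENNReal.ofReal (a ^ (m i)) * volume (Qt i) := by
    intro i
    rw [hQsm, volume_matImage]
    congr 2
    rw [Matrix.det_pow, abs_pow, ← ha]
  have hQsfin : ∀ i, volume (Qs i) ≠ ⊤ := fun i => by
    rw [hQsvol]; exact ENNReal.mul_ne_top ENNReal.ofReal_ne_top (hQtfin i)
  set V : ℝ := max (volume Q₀).toReal (volume Q₁).toReal with hV
  have hV0 : 0 ≤ V := le_trans ENNReal.toReal_nonneg (le_max_left _ _)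
  have hVt : ∀ i, (volume (Qt i)).toReal ≤ V := by
    intro i; rw [hQt]; dsimp only; split
    · exact le_max_left _ _
    · exact le_max_right _ _
  -- lower bound for expanded vectors
  have hlow : ∀ (n : ℕ) (η : EuclideanSpace ℝ (Fin d)),
      ‖η‖ * lm ^ n / b ≤ ‖Matrix.toEuclideanLin (A ^ n) η‖ := by
    intro n η
    have h2 : η = Matrix.toEuclideanLin ((A ^ n)⁻¹) (Matrix.toEuclideanLin (A ^ n) η) := by
      rw [← toEuclideanLin_mul_apply, Matrix.nonsing_inv_mul _ (hdetpow n),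
        toEuclideanLin_one_apply]
    have h1 : ‖η‖ ≤ opNorm ((A ^ n)⁻¹) * ‖Matrix.toEuclideanLin (A ^ n) η‖ := by
      conv_lhs => rw [h2]
      exact norm_toEuclideanLin_le _ _
    have hXnn : 0 ≤ ‖Matrix.toEuclideanLin (A ^ n) η‖ := norm_nonneg _
    have h4 : ‖η‖ ≤ b * (lm ^ n)⁻¹ * ‖Matrix.toEuclideanLin (A ^ n) η‖ :=
      le_trans h1 (mul_le_mul_of_nonneg_right (hbinv n) hXnn)
    have hlmn : (0:ℝ) < lm ^ n := pow_pos hlm0 n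
    rw [div_le_iff₀ hb0]
    calc ‖η‖ * lm ^ n ≤ b * (lm ^ n)⁻¹ * ‖Matrix.toEuclideanLin (A ^ n) η‖ * lm ^ n :=
          mul_le_mul_of_nonneg_right h4 hlmn.le
      _ = ‖Matrix.toEuclideanLin (A ^ n) η‖ * b := by
          field_simp
  -- global bounds for ρ₁ and ρ₂
  have hρ₁le : ∀ ξ, ρ₁ ξ ≤ C := by
    intro ξ
    refine le_trans (hρ₁ ξ) ?_
    have h1 : (1 + ‖ξ‖) ^ (-K₂) ≤ 1 :=
      Real.rpow_le_one_of_one_le_of_nonpos (by linarith [norm_nonneg ξ]) (by linarith)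
    calc C * (1 + ‖ξ‖) ^ (-K₂) ≤ C * 1 := mul_le_mul_of_nonneg_left h1 hC.le
      _ = C := mul_one C
  have hρ₂le : ∀ ξ, ρ₂ ξ ≤ C := by
    intro ξ
    refine le_trans (hρ₂ ξ) ?_
    have h1 : min 1 (‖ξ‖ ^ L₂) ≤ 1 := min_le_left _ _
    have h2 : (1 + ‖ξ‖) ^ (-N₂) ≤ 1 :=
      Real.rpow_le_one_of_one_le_of_nonpos (by linarith [norm_nonneg ξ]) (by linarith)
    have h3 : 0 ≤ (1 + ‖ξ‖) ^ (-N₂) := Real.rpow_nonneg (by linarith [norm_nonneg ξ]) _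
    have h4 : 0 ≤ min 1 (‖ξ‖ ^ L₂) := le_min zero_le_one (Real.rpow_nonneg (norm_nonneg _) _)
    calc C * min 1 (‖ξ‖ ^ L₂) * (1 + ‖ξ‖) ^ (-N₂)
        ≤ C * 1 * (1 + ‖ξ‖) ^ (-N₂) :=
          mul_le_mul_of_nonneg_right (mul_le_mul_of_nonneg_left h1 hC.le) h3
      _ ≤ C * 1 * 1 := mul_le_mul_of_nonneg_left h2 (by linarith)
      _ = C := by ring
  -- decay constant
  set Cd : ℝ := C + C * (r / b) ^ (-K₂) + C * (r / b) ^ (-N₂) with hCd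
  have hrb0 : 0 < r / b := div_pos hr hb0
  have hterm1 : 0 ≤ C * (r / b) ^ (-K₂) := mul_nonneg hC.le (Real.rpow_nonneg hrb0.le _)
  have hterm2 : 0 ≤ C * (r / b) ^ (-N₂) := mul_nonneg hC.le (Real.rpow_nonneg hrb0.le _)
  have hCd0 : 0 ≤ Cd := by rw [hCd]; linarith
  have hCge : C ≤ Cd := by rw [hCd]; linarith
  -- abstract decay estimate
  have habs : ∀ EK : ℝ, 0 < EK → E' ≤ EK → ∀ (n : ℕ) (η : EuclideanSpace ℝ (Fin d)),
      r ≤ ‖η‖ →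
      C * (1 + ‖Matrix.toEuclideanLin (A ^ n) η‖) ^ (-EK)
        ≤ (C * (r / b) ^ (-EK)) * (β⁻¹) ^ n := by
    intro EK hEK0 hEKE n η hη
    set X : ℝ := ‖Matrix.toEuclideanLin (A ^ n) η‖ with hX
    have hrb : (0:ℝ) < r / b * lm ^ n := by positivity
    have hlow' : r / b * lm ^ n ≤ X := by
      refine le_trans ?_ (hlow n η)
      rw [div_mul_eq_mul_div, div_le_div_iff₀ hb0 hb0]
      have := mul_le_mul_of_nonneg_right hη (mul_nonneg (pow_pos hlm0 n).le hb0.le)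
      calc r * lm ^ n * b ≤ ‖η‖ * (lm ^ n * b) := by
            calc r * lm ^ n * b = r * (lm ^ n * b) := by ring
              _ ≤ ‖η‖ * (lm ^ n * b) :=
                mul_le_mul_of_nonneg_right hη (by positivity)
        _ = ‖η‖ * lm ^ n * b := by ring
    have h1 : (1 + X) ^ (-EK) ≤ (r / b * lm ^ n) ^ (-EK) := by
      apply Real.rpow_le_rpow_of_nonpos hrb (by linarith [norm_nonneg (Matrix.toEuclideanLin (A ^ n) η)]) (neg_nonpos.2 hEK0.le)
    have h2 : (r / b * lm ^ n) ^ (-EK) = (r / b) ^ (-EK) * ((lm ^ (-EK)) : ℝ) ^ n := by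
      rw [Real.mul_rpow hrb0.le (pow_pos hlm0 n).le, pow_rpow_comm hlm0.le]
    have h3 : (lm : ℝ) ^ (-EK) ≤ β⁻¹ := by
      rw [hβ, ← Real.rpow_neg hlm0.le]
      exact Real.rpow_le_rpow_of_exponent_le hlm1.le (by linarith)
    have h4 : ((lm : ℝ) ^ (-EK)) ^ n ≤ (β⁻¹) ^ n :=
      pow_le_pow_left₀ (Real.rpow_nonneg hlm0.le _) h3 n
    calc C * (1 + X) ^ (-EK) ≤ C * ((r / b) ^ (-EK) * ((lm ^ (-EK)) : ℝ) ^ n) := by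
          rw [← h2]; exact mul_le_mul_of_nonneg_left h1 hC.le
      _ ≤ C * ((r / b) ^ (-EK) * (β⁻¹) ^ n) :=
          mul_le_mul_of_nonneg_left
            (mul_le_mul_of_nonneg_left h4 (Real.rpow_nonneg hrb0.le _)) hC.le
      _ = (C * (r / b) ^ (-EK)) * (β⁻¹) ^ n := by ring
  -- decay of ρ₁, ρ₂ along expansion
  have hβinv0 : 0 ≤ (β⁻¹ : ℝ) := inv_nonneg.2 hβ0.le
  have hdecρ : ∀ (n : ℕ) (η : EuclideanSpace ℝ (Fin d)), r ≤ ‖η‖ →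
      ρ₁ (Matrix.toEuclideanLin (A ^ n) η) ≤ Cd * (β⁻¹) ^ n ∧
      ρ₂ (Matrix.toEuclideanLin (A ^ n) η) ≤ Cd * (β⁻¹) ^ n := by
    intro n η hη
    constructor
    · refine le_trans (hρ₁ _) (le_trans (habs K₂ hK20 (min_le_left _ _) n η hη) ?_)
      exact mul_le_mul_of_nonneg_right (by rw [hCd]; linarith) (pow_nonneg hβinv0 n)
    · have hstep : ρ₂ (Matrix.toEuclideanLin (A ^ n) η)
          ≤ C * (1 + ‖Matrix.toEuclideanLin (A ^ n) η‖) ^ (-N₂) := by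
        refine le_trans (hρ₂ _) ?_
        have h1 : min 1 (‖Matrix.toEuclideanLin (A ^ n) η‖ ^ L₂) ≤ 1 := min_le_left _ _
        have h3 : 0 ≤ (1 + ‖Matrix.toEuclideanLin (A ^ n) η‖) ^ (-N₂) :=
          Real.rpow_nonneg (by linarith [norm_nonneg (Matrix.toEuclideanLin (A ^ n) η)]) _
        calc C * min 1 (‖Matrix.toEuclideanLin (A ^ n) η‖ ^ L₂)
              * (1 + ‖Matrix.toEuclideanLin (A ^ n) η‖) ^ (-N₂)
            ≤ C * 1 * (1 + ‖Matrix.toEuclideanLin (A ^ n) η‖) ^ (-N₂) :=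
              mul_le_mul_of_nonneg_right (mul_le_mul_of_nonneg_left h1 hC.le) h3
          _ = C * (1 + ‖Matrix.toEuclideanLin (A ^ n) η‖) ^ (-N₂) := by ring
      refine le_trans hstep (le_trans (habs N₂ hN20 (min_le_right _ _) n η hη) ?_)
      exact mul_le_mul_of_nonneg_right (by rw [hCd]; linarith) (pow_nonneg hβinv0 n)
  -- F1 exact value
  have hF1gen : ∀ i j : ℕ, (w i / w j) * (|(T j).det| / |(T i).det|) ^ θ
      = α ^ ((m i : ℤ) - (m j : ℤ)) := by
    intro i j
    rw [hwα i, hwα j, hdetT i, hdetT j, ← zpow_natCast a (m j), ← zpow_natCast a (m i),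
      ← zpow_sub₀ ha0.ne', ← zpow_sub₀ ha0.ne']
    have e1 : s * (m i : ℤ) - s * (m j : ℤ) = s * ((m i : ℤ) - (m j : ℤ)) := by ring
    have e2 : (m j : ℤ) - (m i : ℤ) = -((m i : ℤ) - (m j : ℤ)) := by ring
    rw [e1, e2]
    set k : ℤ := (m i : ℤ) - (m j : ℤ) with hk
    rw [hα, ← Real.rpow_intCast a (s * k), ← Real.rpow_intCast a (-k),
      ← Real.rpow_intCast (a ^ ((s:ℝ) - θ)) k, ← Real.rpow_mul ha0.le,
      ← Real.rpow_mul ha0.le, ← Real.rpow_add ha0]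
    congr 1
    push_cast
    ring
  -- the big constant
  have hMc1nn : 0 ≤ (1 + b) ^ σ * (V * Cd) ^ τ :=
    mul_nonneg (Real.rpow_nonneg (by linarith) σ)
      (Real.rpow_nonneg (mul_nonneg hV0 hCd0) τ)
  have hMc2nn : 0 ≤ (1 + b) ^ σ * (V * C) ^ τ :=
    mul_nonneg (Real.rpow_nonneg (by linarith) σ)
      (Real.rpow_nonneg (mul_nonneg hV0 hC.le) τ)
  set Mc : ℝ := max ((1 + b) ^ σ * (V * Cd) ^ τ) ((1 + b) ^ σ * (V * C) ^ τ) with hMc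
  have hMc0 : 0 ≤ Mc := le_trans hMc1nn (le_max_left _ _)
  -- nonnegativity of the integrand
  have hgnn : ∀ (j : ℕ) (x : EuclideanSpace ℝ (Fin d)),
      0 ≤ (if j = 0 then ρ₁ else ρ₂) (Matrix.toEuclideanLin (T j)⁻¹ x) := by
    intro j x
    split
    · exact (hρ₁pos _).le
    · exact (hρ₂pos _).le
  -- master estimate
  have master : ∀ i j : ℕ, N2 i j ≤ Mc * (Qq ^ (m i - m j) * Qq ^ (m j - m i)) := by
    intro i j
    rw [hN2 i j]
    rcases le_or_gt (m j) (m i) with hc | hc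
    · set n : ℕ := m i - m j with hn
      have hmi : m i = m j + n := by omega
      have hmat : (T j)⁻¹ * T i = A ^ n := by
        rw [hTm i, hTm j, hmi, pow_add]
        exact Matrix.nonsing_inv_mul_cancel_left _ _ (hdetpow (m j))
      have hF1 : ((w i / w j) * (|(T j).det| / |(T i).det|) ^ θ) ^ τ = u ^ n := by
        rw [hF1gen i j, show (m i : ℤ) - (m j : ℤ) = (n : ℤ) by omega, zpow_natCast,
          pow_rpow_comm hα0.le, ← hu]
      have hF2 : (1 + opNorm ((T j)⁻¹ * T i)) ^ σ ≤ (1 + b) ^ σ * (lp ^ σ) ^ n := by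
        rw [hmat]
        have h3 : (1:ℝ) ≤ lp ^ n := one_le_pow₀ hlp1.le
        have h1 : 1 + opNorm (A ^ n) ≤ (1 + b) * lp ^ n := by
          have h2 := hbpow n
          have e : (1 + b) * lp ^ n = lp ^ n + b * lp ^ n := by ring
          rw [e]
          linarith
        calc (1 + opNorm (A ^ n)) ^ σ ≤ ((1 + b) * lp ^ n) ^ σ :=
              Real.rpow_le_rpow (by linarith [opNorm_nonneg (A ^ n)]) h1 hσ0
          _ = (1 + b) ^ σ * (lp ^ σ) ^ n := by
              rw [Real.mul_rpow (by linarith) (by positivity), pow_rpow_comm hlp0.le]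
      have hbound : ∀ ξ ∈ Qs i,
          (if j = 0 then ρ₁ else ρ₂) (Matrix.toEuclideanLin (T j)⁻¹ ξ)
            ≤ Cd * (β⁻¹) ^ n := by
        intro ξ hξ
        rw [hQsm i] at hξ
        obtain ⟨η, hη, rfl⟩ := hξ
        have hcomp : Matrix.toEuclideanLin (T j)⁻¹ (Matrix.toEuclideanLin (A ^ (m i)) η)
            = Matrix.toEuclideanLin (A ^ n) η := by
          rw [← toEuclideanLin_mul_apply, hTm j, hmi, pow_add,
            Matrix.nonsing_inv_mul_cancel_left (A ^ (m j)) (A ^ n) (hdetpow (m j))]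
        rw [hcomp]
        rcases Nat.eq_zero_or_pos i with hi0 | hi1
        · have hmIzero : m i = 0 := by simp only [hm]; omega
          have hn0 : n = 0 := by omega
          rw [hn0]
          simp only [pow_zero, mul_one]
          split
          · exact le_trans (hρ₁le _) hCge
          · exact le_trans (hρ₂le _) hCge
        · have hQtQ : Qt i = Q₁ := by
            simp only [hQt]
            rw [if_neg (Nat.pos_iff_ne_zero.1 hi1)]
          have hη' : r ≤ ‖η‖ := (hrR η (by rwa [hQtQ] at hη)).1
          split
          · exact (hdecρ n η hη').1
          · exact (hdecρ n η hη').2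
      have hint := setIntegral_le_of_bound (hQsmeas i) (hQsfin i) (hgnn j) hbound
      have hvol : (volume (Qs i)).toReal = a ^ (m i) * (volume (Qt i)).toReal := by
        rw [hQsvol i, ENNReal.toReal_mul, ENNReal.toReal_ofReal (pow_nonneg ha0.le _)]
      have hF3 : |(T i).det|⁻¹ * ∫ ξ in Qs i,
          (if j = 0 then ρ₁ else ρ₂) (Matrix.toEuclideanLin (T j)⁻¹ ξ)
            ≤ (V * Cd) * (β⁻¹) ^ n := by
        refine le_trans
          (mul_le_mul_of_nonneg_left hint (inv_nonneg.2 (hdetTpos i).le)) ?_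
        rw [hvol, hdetT i]
        have hai : (0:ℝ) < a ^ (m i) := pow_pos ha0 _
        have e : (a ^ (m i))⁻¹ * (a ^ (m i) * (volume (Qt i)).toReal * (Cd * (β⁻¹) ^ n))
            = (volume (Qt i)).toReal * (Cd * (β⁻¹) ^ n) := by
          field_simp
        rw [e]
        calc (volume (Qt i)).toReal * (Cd * (β⁻¹) ^ n)
            ≤ V * (Cd * (β⁻¹) ^ n) :=
              mul_le_mul_of_nonneg_right (hVt i)
                (mul_nonneg hCd0 (pow_nonneg hβinv0 n))
          _ = (V * Cd) * (β⁻¹) ^ n := by ring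
      have hI3nn : 0 ≤ |(T i).det|⁻¹ * ∫ ξ in Qs i,
          (if j = 0 then ρ₁ else ρ₂) (Matrix.toEuclideanLin (T j)⁻¹ ξ) :=
        mul_nonneg (inv_nonneg.2 (abs_nonneg _)) (setIntegral_nonneg' (hgnn j))
      have hF3τ : (|(T i).det|⁻¹ * ∫ ξ in Qs i,
          (if j = 0 then ρ₁ else ρ₂) (Matrix.toEuclideanLin (T j)⁻¹ ξ)) ^ τ
            ≤ (V * Cd) ^ τ * ((β ^ τ)⁻¹) ^ n := by
        refine le_trans (Real.rpow_le_rpow hI3nn hF3 hτ0.le) ?_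
        rw [Real.mul_rpow (mul_nonneg hV0 hCd0) (pow_nonneg hβinv0 n),
          pow_rpow_comm hβinv0, Real.inv_rpow hβ0.le]
      rw [hF1]
      have hF2nn : 0 ≤ (1 + opNorm ((T j)⁻¹ * T i)) ^ σ :=
        Real.rpow_nonneg (by linarith [opNorm_nonneg ((T j)⁻¹ * T i)]) σ
      have htot : u ^ n * (1 + opNorm ((T j)⁻¹ * T i)) ^ σ
            * (|(T i).det|⁻¹ * ∫ ξ in Qs i,
              (if j = 0 then ρ₁ else ρ₂) (Matrix.toEuclideanLin (T j)⁻¹ ξ)) ^ τ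
          ≤ u ^ n * ((1 + b) ^ σ * (lp ^ σ) ^ n) * ((V * Cd) ^ τ * ((β ^ τ)⁻¹) ^ n) := by
        refine mul_le_mul (mul_le_mul le_rfl hF2 hF2nn (pow_nonneg hu0.le n)) hF3τ
          (Real.rpow_nonneg hI3nn τ) ?_
        exact mul_nonneg (pow_nonneg hu0.le n)
          (mul_nonneg (Real.rpow_nonneg (by linarith) σ)
            (pow_nonneg (Real.rpow_nonneg hlp0.le σ) n))
      refine le_trans htot ?_
      have e2 : u ^ n * ((1 + b) ^ σ * (lp ^ σ) ^ n) * ((V * Cd) ^ τ * ((β ^ τ)⁻¹) ^ n)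
          = ((1 + b) ^ σ * (V * Cd) ^ τ) * (u * lp ^ σ * (β ^ τ)⁻¹) ^ n := by
        rw [mul_pow, mul_pow]
        ring
      rw [e2, show u * lp ^ σ * (β ^ τ)⁻¹ = qp by rw [hqp, div_eq_mul_inv]]
      have h5 : qp ^ n ≤ Qq ^ n := pow_le_pow_left₀ hqp0.le (le_max_left _ _) n
      have h6 : Qq ^ (m j - m i) = 1 := by rw [Nat.sub_eq_zero_of_le hc, pow_zero]
      calc ((1 + b) ^ σ * (V * Cd) ^ τ) * qp ^ n ≤ Mc * Qq ^ n :=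
            mul_le_mul (le_max_left _ _) h5 (pow_nonneg hqp0.le n) hMc0
        _ = Mc * (Qq ^ (m i - m j) * Qq ^ (m j - m i)) := by rw [h6, ← hn]; ring
    · set n : ℕ := m j - m i with hn
      have hmj : m j = n + m i := by omega
      have hmat : (T j)⁻¹ * T i = (A ^ n)⁻¹ := by
        rw [hTm i, hTm j, hmj, pow_add, Matrix.mul_inv_rev, mul_assoc,
          ← Matrix.inv_pow' A n, Matrix.pow_inv_comm' A n (m i),
          Matrix.nonsing_inv_mul_cancel_left _ _ (hdetpow (m i)), Matrix.inv_pow']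
      have hF1 : ((w i / w j) * (|(T j).det| / |(T i).det|) ^ θ) ^ τ = (u⁻¹) ^ n := by
        rw [hF1gen i j, show (m i : ℤ) - (m j : ℤ) = -(n : ℤ) by omega, zpow_neg,
          zpow_natCast, Real.inv_rpow (pow_nonneg hα0.le n), pow_rpow_comm hα0.le,
          ← hu, ← inv_pow]
      have hF2 : (1 + opNorm ((T j)⁻¹ * T i)) ^ σ ≤ (1 + b) ^ σ := by
        rw [hmat]
        have h4 : (1:ℝ) ≤ lm ^ n := one_le_pow₀ hlm1.le
        have h3 : (lm ^ n)⁻¹ ≤ 1 := inv_le_one_of_one_le₀ h4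
        have h1 : 1 + opNorm ((A ^ n)⁻¹) ≤ 1 + b := by
          have h2 := hbinv n
          have h5 : b * (lm ^ n)⁻¹ ≤ b * 1 := mul_le_mul_of_nonneg_left h3 hb0.le
          linarith
        exact Real.rpow_le_rpow (by linarith [opNorm_nonneg ((A ^ n)⁻¹)]) h1 hσ0
      have hbound : ∀ ξ ∈ Qs i,
          (if j = 0 then ρ₁ else ρ₂) (Matrix.toEuclideanLin (T j)⁻¹ ξ) ≤ C := by
        intro ξ _
        split
        · exact hρ₁le _
        · exact hρ₂le _
      have hint := setIntegral_le_of_bound (hQsmeas i) (hQsfin i) (hgnn j) hbound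
      have hvol : (volume (Qs i)).toReal = a ^ (m i) * (volume (Qt i)).toReal := by
        rw [hQsvol i, ENNReal.toReal_mul, ENNReal.toReal_ofReal (pow_nonneg ha0.le _)]
      have hF3 : |(T i).det|⁻¹ * ∫ ξ in Qs i,
          (if j = 0 then ρ₁ else ρ₂) (Matrix.toEuclideanLin (T j)⁻¹ ξ) ≤ V * C := by
        refine le_trans
          (mul_le_mul_of_nonneg_left hint (inv_nonneg.2 (hdetTpos i).le)) ?_
        rw [hvol, hdetT i]
        have hai : (0:ℝ) < a ^ (m i) := pow_pos ha0 _
        have e : (a ^ (m i))⁻¹ * (a ^ (m i) * (volume (Qt i)).toReal * C)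
            = (volume (Qt i)).toReal * C := by
          field_simp
        rw [e]
        exact mul_le_mul_of_nonneg_right (hVt i) hC.le
      have hI3nn : 0 ≤ |(T i).det|⁻¹ * ∫ ξ in Qs i,
          (if j = 0 then ρ₁ else ρ₂) (Matrix.toEuclideanLin (T j)⁻¹ ξ) :=
        mul_nonneg (inv_nonneg.2 (abs_nonneg _)) (setIntegral_nonneg' (hgnn j))
      have hF3τ : (|(T i).det|⁻¹ * ∫ ξ in Qs i,
          (if j = 0 then ρ₁ else ρ₂) (Matrix.toEuclideanLin (T j)⁻¹ ξ)) ^ τ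
            ≤ (V * C) ^ τ :=
        Real.rpow_le_rpow hI3nn hF3 hτ0.le
      rw [hF1]
      have hF2nn : 0 ≤ (1 + opNorm ((T j)⁻¹ * T i)) ^ σ :=
        Real.rpow_nonneg (by linarith [opNorm_nonneg ((T j)⁻¹ * T i)]) σ
      have htot : (u⁻¹) ^ n * (1 + opNorm ((T j)⁻¹ * T i)) ^ σ
            * (|(T i).det|⁻¹ * ∫ ξ in Qs i,
              (if j = 0 then ρ₁ else ρ₂) (Matrix.toEuclideanLin (T j)⁻¹ ξ)) ^ τ
          ≤ (u⁻¹) ^ n * (1 + b) ^ σ * (V * C) ^ τ := by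
        refine mul_le_mul (mul_le_mul le_rfl hF2 hF2nn
          (pow_nonneg (inv_nonneg.2 hu0.le) n)) hF3τ (Real.rpow_nonneg hI3nn τ) ?_
        exact mul_nonneg (pow_nonneg (inv_nonneg.2 hu0.le) n)
          (Real.rpow_nonneg (by linarith) σ)
      refine le_trans htot ?_
      have h5 : (u⁻¹) ^ n ≤ Qq ^ n := pow_le_pow_left₀ (inv_nonneg.2 hu0.le)
        (by rw [← hqm]; exact le_max_right _ _) n
      have h6 : Qq ^ (m i - m j) = 1 := by rw [Nat.sub_eq_zero_of_le hc.le, pow_zero]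
      calc (u⁻¹) ^ n * (1 + b) ^ σ * (V * C) ^ τ
          = ((1 + b) ^ σ * (V * C) ^ τ) * (u⁻¹) ^ n := by ring
        _ ≤ Mc * Qq ^ n :=
            mul_le_mul (le_max_right _ _) h5 (pow_nonneg (inv_nonneg.2 hu0.le) n) hMc0
        _ = Mc * (Qq ^ (m i - m j) * Qq ^ (m j - m i)) := by rw [h6, ← hn]; ring
  -- nonnegativity of N2
  have hN2nonneg : ∀ i j : ℕ, 0 ≤ N2 i j := by
    intro i j
    rw [hN2 i j]
    refine mul_nonneg (mul_nonneg ?_ ?_) ?_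
    · exact Real.rpow_nonneg (mul_nonneg (div_nonneg (hwpos i).le (hwpos j).le)
        (Real.rpow_nonneg (div_nonneg (abs_nonneg _) (abs_nonneg _)) θ)) τ
    · exact Real.rpow_nonneg (by linarith [opNorm_nonneg ((T j)⁻¹ * T i)]) σ
    · exact Real.rpow_nonneg (mul_nonneg (inv_nonneg.2 (abs_nonneg _))
        (setIntegral_nonneg' (hgnn j))) τ
  -- pass from m-differences to plain differences
  have hconvkey : ∀ x y : ℕ, Qq ^ (m x - m y) ≤ Qq⁻¹ * Qq ^ (x - y) := by
    intro x y
    have h1 : x - y - 1 ≤ m x - m y := by simp only [hm]; omega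
    have h2 : Qq ^ (m x - m y) ≤ Qq ^ (x - y - 1) :=
      pow_le_pow_of_le_one hQ0.le hQ1.le h1
    refine le_trans h2 ?_
    rcases Nat.eq_zero_or_pos (x - y) with h0 | hpos
    · rw [h0, show (0:ℕ) - 1 = 0 from rfl, pow_zero, mul_one]
      have h4 : (1:ℝ)⁻¹ ≤ Qq⁻¹ := by
        apply inv_anti₀ hQ0 hQ1.le
      simpa using h4
    · obtain ⟨t, ht⟩ : ∃ t, x - y = t + 1 := ⟨x - y - 1, by omega⟩
      rw [ht, show t + 1 - 1 = t from rfl, pow_succ]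
      have e : Qq⁻¹ * (Qq ^ t * Qq) = Qq ^ t * (Qq * Qq⁻¹) := by ring
      rw [e, mul_inv_cancel₀ hQ0.ne', mul_one]
  have hfinal : ∀ i j : ℕ,
      N2 i j ≤ (Mc * (Qq⁻¹ * Qq⁻¹)) * (Qq ^ (i - j) * Qq ^ (j - i)) := by
    intro i j
    refine le_trans (master i j) ?_
    have h3 : Qq ^ (m i - m j) * Qq ^ (m j - m i)
        ≤ (Qq⁻¹ * Qq ^ (i - j)) * (Qq⁻¹ * Qq ^ (j - i)) :=
      mul_le_mul (hconvkey i j) (hconvkey j i) (pow_nonneg hQ0.le _)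
        (mul_nonneg (inv_nonneg.2 hQ0.le) (pow_nonneg hQ0.le _))
    calc Mc * (Qq ^ (m i - m j) * Qq ^ (m j - m i))
        ≤ Mc * ((Qq⁻¹ * Qq ^ (i - j)) * (Qq⁻¹ * Qq ^ (j - i))) :=
          mul_le_mul_of_nonneg_left h3 hMc0
      _ = (Mc * (Qq⁻¹ * Qq⁻¹)) * (Qq ^ (i - j) * Qq ^ (j - i)) := by ring
  have hMfin0 : 0 ≤ Mc * (Qq⁻¹ * Qq⁻¹) :=
    mul_nonneg hMc0 (mul_nonneg (inv_nonneg.2 hQ0.le) (inv_nonneg.2 hQ0.le))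
  constructor
  · exact row_sum_bound hMfin0 hQ0 hQ1 hN2nonneg hfinal
  · refine row_sum_bound hMfin0 hQ0 hQ1 (fun i j => hN2nonneg j i) ?_
    intro i j
    calc N2 j i ≤ (Mc * (Qq⁻¹ * Qq⁻¹)) * (Qq ^ (j - i) * Qq ^ (i - j)) := hfinal j i
      _ = (Mc * (Qq⁻¹ * Qq⁻¹)) * (Qq ^ (i - j) * Qq ^ (j - i)) := by ring
end
end
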